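/- There is no integer vector m = (m₁,m₂,m₃) ∈ ℤ³ such that 3m₁³ + 18m₁²m₃ − 9m₁m₂² − 9m₁m₂m₃ + 27m₁m₃² + 3m₂³ − 9m₂m₃² + 3m₃³ = 1; consequently the matrix A′ = [[1,2,−1],[−1,−2,2],[2,5,−2]] ∈ SL(3,ℤ) has no cyclic vector in ℤ³ (no m such that m, mA′, m(A′)² form a ℤ-basis of ℤ³). -/
import Mathlib


open Matrix

/-- The cubic form `3m₁³ + 18m₁²m₃ − 9m₁m₂² − 9m₁m₂m₃ + 27m₁m₃² + 3m₂³
− 9m₂m₃² + 3m₃³` never takes the value `1` on integer vectors; consequently the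
matrix `A' = [[1,2,−1],[−1,−2,2],[2,5,−2]]` has no cyclic vector in `ℤ³`: there is no
`m ∈ ℤ³` such that `m, mA', m(A')²` form a `ℤ`-basis of `ℤ³` (i.e. the matrix with
these rows has determinant `±1`). -/
theorem stmt19 :
    (¬ ∃ m₁ m₂ m₃ : ℤ,
      3 * m₁ ^ 3 + 18 * m₁ ^ 2 * m₃ - 9 * m₁ * m₂ ^ 2 - 9 * m₁ * m₂ * m₃ +
        27 * m₁ * m₃ ^ 2 + 3 * m₂ ^ 3 - 9 * m₂ * m₃ ^ 2 + 3 * m₃ ^ 3 = 1) ∧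
    (∀ m : Fin 3 → ℤ,
      ¬ IsUnit (Matrix.of
        ![m, Matrix.vecMul m !![(1 : ℤ), 2, -1; -1, -2, 2; 2, 5, -2],
          Matrix.vecMul (Matrix.vecMul m !![(1 : ℤ), 2, -1; -1, -2, 2; 2, 5, -2])
            !![(1 : ℤ), 2, -1; -1, -2, 2; 2, 5, -2]]).det) := by
  constructor
  · rintro ⟨m₁, m₂, m₃, h⟩
    have : ∃ k : ℤ, 3 * k = 1 :=
      ⟨m₁^3 + 6*m₁^2*m₃ - 3*m₁*m₂^2 - 3*m₁*m₂*m₃ + 9*m₁*m₃^2 + m₂^3 - 3*m₂*m₃^2 + m₃^3,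
        by linear_combination h⟩
    obtain ⟨k, hk⟩ := this
    omega
  · intro m h
    rw [Int.isUnit_iff] at h
    set a := m 0; set b := m 1; set c := m 2
    simp only [Matrix.det_fin_three, Matrix.vecMul, dotProduct, Fin.sum_univ_three,
      Matrix.of_apply, Matrix.cons_val', Matrix.cons_val_zero, Matrix.cons_val_one,
      Matrix.head_cons, Matrix.cons_val_fin_one, Matrix.empty_val', Matrix.head_fin_const,
      Matrix.cons_val_two, Matrix.tail_cons] at h
    have : ∃ k : ℤ, (3*k = 1 ∨ 3*k = -1) := by
      rcases h with h | h
      · exact ⟨a^3 + 6*a^2*c - 3*a*b^2 - 3*a*b*c + 9*a*c^2 + b^3 - 3*b*c^2 + c^3,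
          Or.inl (by linear_combination h)⟩
      · exact ⟨a^3 + 6*a^2*c - 3*a*b^2 - 3*a*b*c + 9*a*c^2 + b^3 - 3*b*c^2 + c^3,
          Or.inr (by linear_combination h)⟩
    obtain ⟨k, hk⟩ := this
    omega
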